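/- arXiv:0801.3962 — 2 statements merged into one kernel-verified Lean document; each statement's English description precedes it below -/
import Mathlib

section
/- For every 1/2 < α ≤ 1 and every finite admissible sequence (k₁,…,k_n), the set function μ_α satisfies the consistency property μ_α(I_{k₁⋯k_n}) = Σ_{m} μ_α(I_{k₁⋯k_n m}), where the sum ranges over all m ∈ ℕ₀ for which (k₁,…,k_n,m) is admissible. -/
open Filter MeasureTheory Metric Set Topology

namespace SchmelingStratmann

/-- The (real) Riemann zeta function `ζ(s) = Σ_{n ≥ 1} n^(-s)`. -/
noncomputable def zeta (s : ℝ) : ℝ := ∑' n : ℕ, ((n : ℝ) + 1) ^ (-s)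

/-- The constant `c = (2ζ(2))⁻¹ = 3/π²`. -/
noncomputable def c : ℝ := (2 * zeta 2)⁻¹

/-- The partial sum `Σ_{i=1}^{j} i⁻²`. -/
noncomputable def S (j : ℕ) : ℝ := ∑ i ∈ Finset.range j, (((i : ℝ) + 1) ^ 2)⁻¹

/-- Given the (left endpoint, length) data `a` of a fundamental interval whose word has
last index `k` (the empty word having last index `0`), this is the (left endpoint, length)
data of its child indexed by `m`: the children with `m > k` are placed mutually adjacent
starting from the left endpoint in increasing order of `m`, while for `k ≠ 0` the children
with `m = k, k-1, …, 0` are placed mutually adjacent starting from the right endpoint; the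
child `m ≠ k` has length `c ⬝ len ⬝ |m - k|⁻²` and the child `m = k ≠ 0` has length
`c ⬝ len ⬝ (2k)⁻²`. -/
noncomputable def child (a : ℝ × ℝ) (k m : ℕ) : ℝ × ℝ :=
  if k < m then
    (a.1 + c * a.2 * S (m - k - 1), c * a.2 * (((m : ℝ) - (k : ℝ)) ^ 2)⁻¹)
  else if m < k then
    (a.1 + a.2 - c * a.2 * (((2 * (k : ℝ)) ^ 2)⁻¹ + S (k - m)),
      c * a.2 * (((k : ℝ) - (m : ℝ)) ^ 2)⁻¹)
  else
    (a.1 + a.2 - c * a.2 * ((2 * (k : ℝ)) ^ 2)⁻¹, c * a.2 * ((2 * (k : ℝ)) ^ 2)⁻¹)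

noncomputable def buildAux : ℕ → ℝ × ℝ → List ℕ → ℝ × ℝ
  | _, a, [] => a
  | k, a, m :: w => buildAux m (child a k m) w

/-- The (left endpoint, length) data of the fundamental interval of the word `w`,
starting from `I_∅ = [0,1)`. -/
noncomputable def intData (w : List ℕ) : ℝ × ℝ := buildAux 0 (0, 1) w

/-- The fundamental half-open interval `I_{k₁⋯k_n}` of the word `w = [k₁, …, k_n]`. -/
noncomputable def I (w : List ℕ) : Set ℝ :=
  Set.Ico (intData w).1 ((intData w).1 + (intData w).2)

/-- The diameter (length) `|I_{k₁⋯k_n}|` of a fundamental interval. -/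
noncomputable def len (w : List ℕ) : ℝ := (intData w).2

/-- A finite word `[k₁, …, k_n]` is admissible if `k₁ ≠ 0` and `kᵢ = 0` implies
`k_{i+1} ≠ 0` (with the convention `k₀ = 0`). -/
def Adm (w : List ℕ) : Prop := List.Chain (fun a b => a = 0 → b ≠ 0) 0 w

/-- Admissibility of an infinite sequence (0-based: `k 0` is `k₁`). -/
def AdmSeq (k : ℕ → ℕ) : Prop := k 0 ≠ 0 ∧ ∀ i, k i = 0 → k (i + 1) ≠ 0

/-- The length-`n` prefix `[k₁, …, k_n]` of an infinite sequence. -/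
def pref (k : ℕ → ℕ) (n : ℕ) : List ℕ := (List.range n).map k

/-- The Cantor-like set `C = ⋂_{n ≥ 1} ⋃_{I ∈ C_n} I`. -/
noncomputable def Cset : Set ℝ :=
  ⋂ n : ℕ, ⋃ w ∈ {w : List ℕ | Adm w ∧ w.length = n + 1}, I w

/-- The set `C_∞` of dissipative points: points `ρ(k₁,k₂,…) = ⋂_n cl(I_{k₁⋯k_n})` for
admissible sequences with `k_n → ∞`. -/
noncomputable def Cinf : Set ℝ :=
  {x | ∃ k : ℕ → ℕ, AdmSeq k ∧ Tendsto k atTop atTop ∧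
    ∀ n, x ∈ closure (I (pref k n))}

/-- The set `C_∞^γ` of dissipative points whose coding satisfies
`limsup_n |k_{n+1} - k_n| / n^γ ≤ 1`. -/
noncomputable def CinfGamma (γ : ℝ) : Set ℝ :=
  {x | ∃ k : ℕ → ℕ, AdmSeq k ∧ Tendsto k atTop atTop ∧
    limsup (fun n : ℕ => |((k (n + 1) : ℝ)) - (k n : ℝ)| / ((n + 1 : ℝ)) ^ γ) atTop ≤ 1 ∧
    ∀ n, x ∈ closure (I (pref k n))}

/-- The transition weights `p_α(k, m)` on `ℕ₀`. -/
noncomputable def p (α : ℝ) (k m : ℕ) : ℝ :=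
  if m = k then (if k = 0 then 0 else (2 * zeta (2 * α))⁻¹ * (2 * (k : ℝ)) ^ (-(2 * α)))
  else if m = 0 then (2 * zeta (2 * α))⁻¹ * (k : ℝ) ^ (-(2 * α))
  else (2 * zeta (2 * α))⁻¹ *
    (|(m : ℝ) - (k : ℝ)| ^ (-(2 * α)) + ((m : ℝ) + (k : ℝ)) ^ (-(2 * α)))

noncomputable def muAux (α : ℝ) : ℕ → List ℕ → ℝ
  | _, [] => 1
  | k, m :: w => p α k m * muAux α m w

/-- The set function `μ_α` on fundamental intervals:
`μ_α(I_{k₁⋯k_n}) = Π_{i=0}^{n-1} p_α(k_i, k_{i+1})` with `k₀ = 0`. -/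
noncomputable def mu (α : ℝ) (w : List ℕ) : ℝ := muAux α 0 w

/-- The increment distribution of the Cauchy-type random walk:
`P(increment = l) = (2ζ(β))⁻¹ |l|^(-β)` for `l ≠ 0`. -/
noncomputable def q (β : ℝ) (l : ℤ) : ℝ :=
  if l = 0 then 0 else (2 * zeta β)⁻¹ * |(l : ℝ)| ^ (-β)

section Aux

lemma zt_summable {s : ℝ} (hs : 1 < s) :
    Summable (fun n : ℕ => ((n : ℝ) + 1) ^ (-s)) := by
  have h : Summable (fun n : ℕ => 1 / (n : ℝ) ^ s) := Real.summable_one_div_nat_rpow.2 hs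
  have h1 := (summable_nat_add_iff 1).2 h
  refine h1.congr fun n => ?_
  push_cast
  rw [Real.rpow_neg (by positivity), one_div]

lemma zeta_pos {s : ℝ} (hs : 1 < s) : 0 < zeta s :=
  Summable.tsum_pos (zt_summable hs) (fun n => by positivity) 0 (by positivity)

/-- helper function `g β m = m^{-β}` for `m ≠ 0`, `0` at `0`. -/
noncomputable def g (β : ℝ) (m : ℕ) : ℝ := if m = 0 then 0 else (m : ℝ) ^ (-β)

lemma g_succ (β : ℝ) (n : ℕ) : g β (n + 1) = ((n : ℝ) + 1) ^ (-β) := by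
  simp only [g, if_neg (Nat.succ_ne_zero n)]
  push_cast
  ring_nf

lemma summable_g {β : ℝ} (hβ : 1 < β) : Summable (g β) := by
  rw [← summable_nat_add_iff 1]
  exact (zt_summable hβ).congr fun n => (g_succ β n).symm

lemma tsum_g {β : ℝ} (hβ : 1 < β) : ∑' m, g β m = zeta β := by
  rw [Summable.tsum_eq_zero_add (summable_g hβ)]
  simp only [g_succ]
  simp [g, zeta]

lemma tsum_p {α : ℝ} (hα : 1 / 2 < α) (k : ℕ) : ∑' m, p α k m = 1 := by
  set β := 2 * α with hβdef
  have hβ : 1 < β := by rw [hβdef]; linarith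
  have hZ : 0 < zeta β := zeta_pos hβ
  rcases eq_or_ne k 0 with rfl | hk
  · have hfun : p α 0 = fun m => (zeta β)⁻¹ * g β m := by
      funext m
      rcases eq_or_ne m 0 with rfl | hm
      · simp [p, g]
      · simp only [p, g, if_neg hm, Nat.cast_zero, sub_zero, add_zero,
          abs_of_nonneg (Nat.cast_nonneg m : (0:ℝ) ≤ (m:ℝ)), ← hβdef]
        rw [mul_inv]
        ring
    rw [hfun, tsum_mul_left, tsum_g hβ, inv_mul_cancel₀ hZ.ne']
  · set A : ℕ → ℝ := fun m => g β (Nat.dist m k) with hA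
    set B : ℕ → ℝ := fun m => if m = 0 then 0 else g β (m + k) with hB
    have hAshift : ∀ n, A (n + k) = g β n := fun n => by simp [hA, Nat.dist]
    have hsA : Summable A := by
      rw [← summable_nat_add_iff k]
      exact (summable_g hβ).congr fun n => (hAshift n).symm
    have hBshift : ∀ n, B (n + 1) = g β (n + (k + 1)) := fun n => by
      simp only [hB, if_neg (Nat.succ_ne_zero n)]
      congr 1
      omega
    have hsB : Summable B := by
      rw [← summable_nat_add_iff 1]
      exact (((summable_nat_add_iff (k+1)).2 (summable_g hβ))).congr
        fun n => (hBshift n).symm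
    set Sk : ℝ := ∑ i ∈ Finset.range k, g β (i + 1) with hSk
    have htA : ∑' m, A m = Sk + zeta β := by
      rw [← Summable.sum_add_tsum_nat_add k hsA]
      congr 1
      · rw [hSk, ← Finset.sum_range_reflect (fun j => g β (j + 1)) k]
        refine Finset.sum_congr rfl fun i hi => ?_
        simp only [Finset.mem_range] at hi
        have : Nat.dist i k = k - 1 - i + 1 := by unfold Nat.dist; omega
        simp [hA, this]
      · rw [← tsum_g hβ]
        exact tsum_congr hAshift
    have htB : ∑' m, B m = zeta β - Sk := by
      rw [Summable.tsum_eq_zero_add hsB]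
      have hB0 : B 0 = 0 := by simp [hB]
      have ht : (∑' n, B (n + 1)) = ∑' n, g β (n + (k + 1)) := tsum_congr hBshift
      have h1 := Summable.sum_add_tsum_nat_add (k+1) (summable_g hβ)
      have h2 : ∑ i ∈ Finset.range (k+1), g β i = Sk := by
        rw [Finset.sum_range_succ', hSk]
        simp [g]
      rw [tsum_g hβ] at h1
      rw [hB0, ht]
      linarith
    have hfun : p α k = fun m => (2 * zeta β)⁻¹ * (A m + B m) := by
      funext m
      rcases eq_or_ne m k with rfl | hmk
      · have hA2 : A m = 0 := by simp [hA, Nat.dist_self, g]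
        have hB2 : B m = (2 * (m : ℝ)) ^ (-β) := by
          have h2 : ((m + m : ℕ) : ℝ) = 2 * (m : ℝ) := by push_cast; ring
          simp only [hB, if_neg hk, g, if_neg (by omega : ¬ m + m = 0), h2]
        rw [hA2, hB2]
        simp [p, hk, ← hβdef]
      · rcases eq_or_ne m 0 with rfl | hm
        · have hB0 : B 0 = 0 := by simp [hB]
          have hA0 : A 0 = (k : ℝ) ^ (-β) := by
            simp [hA, Nat.dist, g, hk]
          simp [p, hmk, hB0, hA0, ← hβdef]
        · have hA1 : A m = |(m : ℝ) - (k : ℝ)| ^ (-β) := by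
            have hd : ¬ Nat.dist m k = 0 := by unfold Nat.dist; omega
            have hc : ((Nat.dist m k : ℕ) : ℝ) = |(m : ℝ) - (k : ℝ)| := by
              rcases lt_or_gt_of_ne hmk with h | h
              · have hdist : Nat.dist m k = k - m := by unfold Nat.dist; omega
                rw [hdist, Nat.cast_sub h.le,
                  abs_of_nonpos (sub_nonpos.mpr (by exact_mod_cast h.le))]
                ring
              · have hdist : Nat.dist m k = m - k := by unfold Nat.dist; omega
                rw [hdist, Nat.cast_sub h.le,
                  abs_of_nonneg (sub_nonneg.mpr (by exact_mod_cast h.le))]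
            simp only [hA, g, if_neg hd, hc]
          have hB1 : B m = ((m : ℝ) + (k : ℝ)) ^ (-β) := by
            have h2 : ((m + k : ℕ) : ℝ) = (m : ℝ) + (k : ℝ) := by push_cast; ring
            simp only [hB, if_neg hm, g, if_neg (by omega : ¬ m + k = 0), h2]
          simp [p, hmk, hm, hA1, hB1, ← hβdef]
    rw [hfun, tsum_mul_left, Summable.tsum_add hsA hsB, htA, htB]
    have h3 : Sk + zeta β + (zeta β - Sk) = 2 * zeta β := by ring
    rw [h3, inv_mul_cancel₀ (by positivity)]

/-- The last index of the word `j :: w`. -/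
def lastK : ℕ → List ℕ → ℕ
  | j, [] => j
  | _, a :: l => lastK a l

lemma muAux_append (α : ℝ) (j : ℕ) (w : List ℕ) (m : ℕ) :
    muAux α j (w ++ [m]) = muAux α j w * p α (lastK j w) m := by
  induction w generalizing j with
  | nil => simp [muAux, lastK]
  | cons a l ih => simp [muAux, lastK, ih a, mul_assoc]

lemma chain_append (j : ℕ) (w : List ℕ) (m : ℕ) :
    List.Chain (fun a b => a = 0 → b ≠ 0) j (w ++ [m]) ↔
      List.Chain (fun a b => a = 0 → b ≠ 0) j w ∧ (lastK j w = 0 → m ≠ 0) := by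
  induction w generalizing j with
  | nil => simp [lastK, List.Chain, List.isChain_cons_cons]
  | cons a l ih =>
    rw [List.cons_append]
    simp only [List.Chain, List.isChain_cons_cons] at ih ⊢
    simp [lastK, ih a, and_assoc]

end Aux

/-- the consistency property of the set function `μ_α`: for every
`1/2 < α ≤ 1` and every finite admissible word `w`,
`μ_α(I_w) = Σ_m μ_α(I_{wm})`, the sum ranging over the `m` with `w ++ [m]` admissible. -/


theorem mu_consistency (α : ℝ) (hα₁ : 1 / 2 < α) (hα₂ : α ≤ 1)
    (w : List ℕ) (hw : Adm w) :
    mu α w = ∑' m : {m : ℕ // Adm (w ++ [m])}, mu α (w ++ [(m : ℕ)]) := by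
  set k := lastK 0 w with hk
  have hmu : ∀ m : ℕ, mu α (w ++ [m]) = mu α w * p α k m := fun m =>
    muAux_append α 0 w m
  have hadm : ∀ m : ℕ, Adm (w ++ [m]) ↔ (k = 0 → m ≠ 0) := fun m => by
    rw [Adm, chain_append]
    exact and_iff_right hw
  have h1 : (∑' m : {m : ℕ // Adm (w ++ [m])}, mu α (w ++ [(m : ℕ)]))
      = ∑' m : {m : ℕ // Adm (w ++ [m])}, mu α w * p α k (m : ℕ) :=
    tsum_congr fun m => hmu m
  rw [h1]
  have h2 : (∑' m : {m : ℕ // Adm (w ++ [m])}, mu α w * p α k (m : ℕ))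
      = ∑' m : ℕ, mu α w * p α k m := by
    refine tsum_subtype_eq_of_support_subset (f := fun m : ℕ => mu α w * p α k m)
      (s := {m : ℕ | Adm (w ++ [m])}) ?_
    intro m hm
    by_contra hadm'
    have := (hadm m).not.1 hadm'
    push_neg at this
    obtain ⟨hk0, hm0⟩ := this
    apply hm
    simp [hk0, hm0, p]
  rw [h2, tsum_mul_left, tsum_p hα₁ k, mul_one]


end SchmelingStratmann
end

section
/- For every 1 < β < 2, the random walk (Y_n^β) on ℤ is transient; that is, almost surely lim_{n→∞} |Y_n^β| = ∞. -/
open Filter MeasureTheory Metric Set Topology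
open scoped ENNReal NNReal

namespace SchmelingStratmann

variable {β : ℝ}

lemma summable_zeta (hβ : 1 < β) : Summable (fun n : ℕ => ((n : ℝ) + 1) ^ (-β)) := by
  have h := (Real.summable_nat_rpow (p := -β)).2 (by linarith)
  have := (summable_nat_add_iff 1).2 h
  refine this.congr fun n => by push_cast; ring_nf

lemma zeta_pos_s6 (hβ : 1 < β) : 0 < zeta β := by
  have h := summable_zeta hβ
  have h1 : ((0 : ℕ) + 1 : ℝ) ^ (-β) ≤ zeta β := Summable.le_tsum h 0 fun i _ => by positivity
  have : (0:ℝ) < (((0:ℕ) : ℝ) + 1) ^ (-β) := by positivity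
  linarith

lemma q_nonneg (hβ : 1 < β) (l : ℤ) : 0 ≤ q β l := by
  unfold q
  have := zeta_pos_s6 hβ
  split
  · exact le_refl _
  · positivity

lemma q_le (hβ : 1 < β) (l : ℤ) : q β l ≤ (2 * zeta β)⁻¹ * |(l : ℝ)| ^ (-β) := by
  unfold q
  split
  · subst ‹l = 0›
    simp [Real.zero_rpow (by linarith : -β ≠ 0)]
  · exact le_refl _

lemma q_symm (l : ℤ) : q β (-l) = q β l := by
  unfold q
  simp [neg_eq_zero]

lemma summable_q (hβ : 1 < β) : Summable (q β) := by
  have h := (Real.summable_abs_int_rpow hβ).mul_left (2 * zeta β)⁻¹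
  refine h.of_nonneg_of_le (q_nonneg hβ) (q_le hβ)

lemma tsum_q_nat (hβ : 1 < β) : ∑' n : ℕ, q β ((n : ℤ) + 1) = 1/2 := by
  have : (fun n : ℕ => q β ((n:ℤ) + 1)) = fun n : ℕ => (2 * zeta β)⁻¹ * ((n : ℝ) + 1) ^ (-β) := by
    funext n
    unfold q
    rw [if_neg (by positivity)]
    congr 1
    rw [abs_of_pos (by push_cast; positivity)]
    push_cast; ring_nf
  rw [this, tsum_mul_left]
  show (2 * zeta β)⁻¹ * zeta β = 1/2
  have := zeta_pos_s6 hβ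
  field_simp

lemma summable_q_nat (hβ : 1 < β) : Summable (fun n : ℕ => q β ((n:ℤ) + 1)) :=
  (summable_q hβ).comp_injective (fun a b h => by simpa using h)

lemma summable_q_nat' (hβ : 1 < β) : Summable (fun n : ℕ => q β (n:ℤ)) :=
  (summable_q hβ).comp_injective (fun a b h => by simpa using h)

lemma tsum_q (hβ : 1 < β) : ∑' l : ℤ, q β l = 1 := by
  have hs := summable_q hβ
  have hneg : Summable (fun n : ℕ => q β (-((n:ℤ) + 1))) := by
    refine (summable_q_nat hβ).congr fun n => (q_symm _).symm
  rw [tsum_of_nat_of_neg_add_one (summable_q_nat' hβ) hneg]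
  have h2 : ∑' n : ℕ, q β (-((n : ℤ)+1)) = 1/2 := by
    simp_rw [q_symm]; exact tsum_q_nat hβ
  have h1 : ∑' n : ℕ, q β (n : ℤ) = 1/2 := by
    rw [Summable.tsum_eq_zero_add (summable_q_nat' hβ)]
    have h0 : q β ((0:ℕ) : ℤ) = 0 := by unfold q; simp
    rw [h0, zero_add]
    push_cast
    exact tsum_q_nat hβ
  rw [h1, h2]; norm_num

noncomputable def phi (β t : ℝ) : ℝ := ∑' l : ℤ, q β l * Real.cos (l * t)

variable {t : ℝ}

lemma summable_phi (hβ : 1 < β) (t : ℝ) :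
    Summable (fun l : ℤ => q β l * Real.cos (l * t)) := by
  refine (summable_q hβ).of_norm_bounded fun l => ?_
  rw [norm_mul, Real.norm_eq_abs, Real.norm_eq_abs, abs_of_nonneg (q_nonneg hβ l)]
  calc q β l * |Real.cos (l*t)| ≤ q β l * 1 :=
        mul_le_mul_of_nonneg_left (Real.abs_cos_le_one _) (q_nonneg hβ l)
    _ = q β l := mul_one _

lemma abs_phi_le_one (hβ : 1 < β) (t : ℝ) : |phi β t| ≤ 1 := by
  have h2 : Summable (fun l : ℤ => ‖q β l * Real.cos (l * t)‖) := by
    simpa only [Real.norm_eq_abs] using (summable_phi hβ t).abs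
  have h1 : ‖∑' l : ℤ, q β l * Real.cos (l * t)‖ ≤ ∑' l : ℤ, ‖q β l * Real.cos (l * t)‖ :=
    norm_tsum_le_tsum_norm h2
  simp only [Real.norm_eq_abs] at h1
  refine (le_of_eq (by rfl)).trans (h1.trans ?_)
  rw [← tsum_q hβ]
  refine Summable.tsum_le_tsum (fun l => ?_) (summable_phi hβ t).abs (summable_q hβ)
  rw [abs_mul, abs_of_nonneg (q_nonneg hβ l)]
  calc q β l * |Real.cos (l*t)| ≤ q β l * 1 :=
        mul_le_mul_of_nonneg_left (Real.abs_cos_le_one _) (q_nonneg hβ l)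
    _ = q β l := mul_one _

lemma continuous_phi (hβ : 1 < β) : Continuous (phi β) := by
  refine continuous_tsum (fun l => ?_) (summable_q hβ) fun l x => ?_
  · exact continuous_const.mul (Real.continuous_cos.comp (continuous_const.mul continuous_id))
  rw [norm_mul, Real.norm_eq_abs, Real.norm_eq_abs, abs_of_nonneg (q_nonneg hβ l)]
  calc q β l * |Real.cos (l*x)| ≤ q β l * 1 :=
        mul_le_mul_of_nonneg_left (Real.abs_cos_le_one _) (q_nonneg hβ l)
    _ = q β l := mul_one _

lemma summable_one_sub_cos (hβ : 1 < β) (t : ℝ) :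
    Summable (fun l : ℤ => q β l * (1 - Real.cos (l * t))) := by
  have := (summable_q hβ).sub (summable_phi hβ t)
  refine this.congr fun l => by ring

lemma summable_one_add_cos (hβ : 1 < β) (t : ℝ) :
    Summable (fun l : ℤ => q β l * (1 + Real.cos (l * t))) := by
  have := (summable_q hβ).add (summable_phi hβ t)
  refine this.congr fun l => by ring

lemma one_sub_phi (hβ : 1 < β) (t : ℝ) :
    1 - phi β t = ∑' l : ℤ, q β l * (1 - Real.cos (l * t)) := by
  rw [show (1:ℝ) - phi β t = (∑' l : ℤ, q β l) - phi β t by rw [tsum_q hβ]]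
  unfold phi
  rw [← Summable.tsum_sub (summable_q hβ) (summable_phi hβ t)]
  exact tsum_congr fun l => by ring

lemma one_add_phi (hβ : 1 < β) (t : ℝ) :
    1 + phi β t = ∑' l : ℤ, q β l * (1 + Real.cos (l * t)) := by
  rw [show (1:ℝ) + phi β t = (∑' l : ℤ, q β l) + phi β t by rw [tsum_q hβ]]
  unfold phi
  rw [← Summable.tsum_add (summable_q hβ) (summable_phi hβ t)]
  exact tsum_congr fun l => by ring

lemma q_ge (hβ : 1 < β) {l : ℤ} (hl : 1 ≤ l) {M : ℝ} (hM : (l:ℝ) ≤ M) :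
    (2 * zeta β)⁻¹ * M ^ (-β) ≤ q β l := by
  have hl0 : (0:ℝ) < (l:ℝ) := by exact_mod_cast hl
  have : q β l = (2 * zeta β)⁻¹ * |(l:ℝ)| ^ (-β) := by
    unfold q; rw [if_neg (by omega)]
  rw [this, abs_of_pos hl0]
  have hz := zeta_pos_s6 hβ
  refine mul_le_mul_of_nonneg_left ?_ (by positivity)
  exact Real.rpow_le_rpow_of_nonpos hl0 hM (by linarith)

local notation "π" => Real.pi

lemma lb_small (hβ : 1 < β) {t : ℝ} (ht : 0 < t) (ht1 : t ≤ 1) :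
    (2 * zeta β)⁻¹ * π ^ (-β) / 2 * t ^ (β - 1) ≤ 1 - phi β t := by
  have hπ := Real.pi_pos
  have hπ3 := Real.pi_gt_three
  have hz := zeta_pos_s6 hβ
  set a : ℕ := ⌈π / (2*t)⌉₊ with ha
  set b : ℕ := ⌊π / t⌋₊ with hb
  have hpt : 0 < π / t := by positivity
  have hp2t : 0 < π / (2*t) := by positivity
  have ha1 : 1 ≤ a := Nat.one_le_ceil_iff.2 hp2t
  have haup : (a:ℝ) < π / (2*t) + 1 := Nat.ceil_lt_add_one hp2t.le
  have halow : π / (2*t) ≤ (a:ℝ) := Nat.le_ceil _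
  have hbup : (b:ℝ) ≤ π / t := Nat.floor_le hpt.le
  have hblow : π / t - 1 < (b:ℝ) := by
    have := Nat.lt_floor_add_one (π / t); linarith
  set F : Finset ℤ := Finset.Icc (a:ℤ) (b:ℤ) with hF
  set C : ℝ := (2 * zeta β)⁻¹ * (π/t) ^ (-β) with hC
  have hC0 : 0 ≤ C := by positivity
  have hterm : ∀ l ∈ F, C ≤ q β l * (1 - Real.cos (l * t)) := by
    intro l hl
    rw [hF, Finset.mem_Icc] at hl
    have hl1 : (1:ℤ) ≤ l := le_trans (by exact_mod_cast ha1) hl.1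
    have hlR : (l:ℝ) ≤ (b:ℝ) := by exact_mod_cast hl.2
    have hlA : (a:ℝ) ≤ (l:ℝ) := by exact_mod_cast hl.1
    have hq := q_ge hβ hl1 (hlR.trans hbup)
    have hcos : Real.cos ((l:ℝ) * t) ≤ 0 := by
      apply Real.cos_nonpos_of_pi_div_two_le_of_le
      · calc π/2 = π/(2*t) * t := by field_simp
          _ ≤ (l:ℝ) * t := by nlinarith
      · have h1 : (l:ℝ) * t ≤ (π/t) * t := by nlinarith
        have h2 : (π/t) * t = π := by field_simp
        nlinarith
    calc C = C * 1 := by ring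
      _ ≤ q β l * (1 - Real.cos ((l:ℝ) * t)) := by
          apply mul_le_mul hq (by linarith) zero_le_one (le_trans hC0 hq)
  have hsum : ∑ l ∈ F, q β l * (1 - Real.cos (l * t)) ≤ 1 - phi β t := by
    rw [one_sub_phi hβ t]
    refine Summable.sum_le_tsum F (fun l _ => ?_) (summable_one_sub_cos hβ t)
    have hc := Real.cos_le_one ((l:ℝ) * t)
    have := q_nonneg hβ l
    nlinarith
  have hsum2 : (F.card : ℝ) * C ≤ ∑ l ∈ F, q β l * (1 - Real.cos (l * t)) := by
    calc (F.card : ℝ) * C = ∑ _l ∈ F, C := by rw [Finset.sum_const, nsmul_eq_mul]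
      _ ≤ _ := Finset.sum_le_sum hterm
  have hcard : 1/(2*t) ≤ (F.card : ℝ) := by
    have hcc : F.card = (((b:ℤ) + 1 - (a:ℤ)).toNat) := by rw [hF]; exact Int.card_Icc _ _
    have h1 : ((b:ℤ) + 1 - a : ℤ) ≤ ((((b:ℤ) + 1 - a).toNat : ℤ)) := Int.self_le_toNat _
    have h2 : ((b:ℝ) + 1 - (a:ℝ) : ℝ) ≤ (F.card : ℝ) := by
      rw [hcc]; exact_mod_cast h1
    have hd : π/t = 2 * (π/(2*t)) := by field_simp
    have h3 : π/(2*t) - 1 ≤ (b:ℝ) + 1 - (a:ℝ) := by linarith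
    have h4 : π/(2*t) - 1 - 1/(2*t) = (π - 1 - 2*t)/(2*t) := by field_simp; ring
    have h5 : (0:ℝ) ≤ (π - 1 - 2*t)/(2*t) := by
      apply div_nonneg (by linarith) (by linarith)
    linarith
  -- final algebra
  have key : 1/(2*t) * C ≤ 1 - phi β t := by
    calc 1/(2*t) * C ≤ (F.card : ℝ) * C := mul_le_mul_of_nonneg_right hcard hC0
      _ ≤ _ := le_trans hsum2 hsum
  have halg : (2 * zeta β)⁻¹ * π ^ (-β) / 2 * t ^ (β - 1) = 1/(2*t) * C := by
    rw [hC]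
    rw [Real.div_rpow hπ.le ht.le, Real.rpow_neg ht.le, Real.rpow_sub ht, Real.rpow_one]
    field_simp
  rw [halg]; exact key

lemma lb_mid (hβ : 1 < β) {t : ℝ} (ht : 1 ≤ t) (ht2 : t ≤ π) :
    (2 * zeta β)⁻¹ * (3*π/2) ^ (-β) ≤ 1 - phi β t := by
  have hπ := Real.pi_pos
  have hz := zeta_pos_s6 hβ
  set l₀ : ℤ := round (π / t) with hl₀
  have ht0 : (0:ℝ) < t := by linarith
  have hpt1 : 1 ≤ π / t := (one_le_div ht0).2 ht2
  have hptπ : π / t ≤ π := by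
    rw [div_le_iff₀ ht0]; nlinarith
  have hround : |(l₀:ℝ) - π/t| ≤ 1/2 := by
    rw [abs_sub_comm]; exact abs_sub_round (π/t)
  rw [abs_le] at hround
  have hl1 : (1:ℤ) ≤ l₀ := by
    have h0 : (0:ℤ) < l₀ := by exact_mod_cast (show (0:ℝ) < (l₀:ℝ) by linarith)
    omega
  have hlM : (l₀:ℝ) ≤ 3*π/2 := by linarith
  have hq := q_ge hβ hl1 hlM
  have hcos : Real.cos ((l₀:ℝ) * t) ≤ 0 := by
    apply Real.cos_nonpos_of_pi_div_two_le_of_le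
    · have : (l₀:ℝ) * t ≥ (π/t - 1/2) * t := by nlinarith
      have h2 : (π/t) * t = π := by field_simp
      nlinarith
    · have : (l₀:ℝ) * t ≤ (π/t + 1/2) * t := by nlinarith
      have h2 : (π/t) * t = π := by field_simp
      nlinarith
  have hsingle : q β l₀ * (1 - Real.cos ((l₀:ℝ) * t)) ≤ 1 - phi β t := by
    rw [one_sub_phi hβ t]
    refine Summable.le_tsum (summable_one_sub_cos hβ t) l₀ (fun j _ => ?_)
    have hc := Real.cos_le_one ((j:ℝ) * t)
    have := q_nonneg hβ j
    nlinarith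
  have : (2 * zeta β)⁻¹ * (3*π/2) ^ (-β) ≤ q β l₀ * (1 - Real.cos ((l₀:ℝ) * t)) := by
    calc (2 * zeta β)⁻¹ * (3*π/2) ^ (-β) = (2 * zeta β)⁻¹ * (3*π/2) ^ (-β) * 1 := by ring
      _ ≤ q β l₀ * (1 - Real.cos ((l₀:ℝ) * t)) := by
          apply mul_le_mul hq (by linarith) zero_le_one
          refine le_trans (by positivity) hq
  linarith

lemma lb_plus (hβ : 1 < β) {t : ℝ} (ht : 0 < t) (ht2 : t ≤ π) :
    (2 * zeta β)⁻¹ * 2 ^ (-β) / 2 ≤ 1 + phi β t := by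
  have hπ := Real.pi_pos
  have hz := zeta_pos_s6 hβ
  have hterm : ∀ l : ℤ, 0 ≤ q β l * (1 + Real.cos ((l:ℝ) * t)) := by
    intro j
    have hc := Real.neg_one_le_cos ((j:ℝ) * t)
    have := q_nonneg hβ j
    nlinarith
  have hcos23 : Real.cos (2*π/3) = -(1/2) := by
    have h1 : 2*π/3 = π - π/3 := by ring
    rw [h1, Real.cos_pi_sub, Real.cos_pi_div_three]
  rcases le_or_gt t (2*π/3) with hcase | hcase
  · -- use l = 1
    have hcos : -(1/2) ≤ Real.cos t := by
      rw [← hcos23]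
      exact Real.cos_le_cos_of_nonneg_of_le_pi ht.le (by linarith) hcase
    have hq : (2 * zeta β)⁻¹ * 2 ^ (-β) ≤ q β 1 := q_ge hβ le_rfl (by norm_num)
    have hsingle : q β 1 * (1 + Real.cos (((1:ℤ):ℝ) * t)) ≤ 1 + phi β t := by
      rw [one_add_phi hβ t]
      exact Summable.le_tsum (summable_one_add_cos hβ t) 1 (fun j _ => hterm j)
    have h1 : ((1:ℤ):ℝ) * t = t := by norm_num
    rw [h1] at hsingle
    have hA0 : (0:ℝ) ≤ (2 * zeta β)⁻¹ * 2 ^ (-β) := by positivity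
    have := mul_le_mul hq (show (1:ℝ)/2 ≤ 1 + Real.cos t by linarith) (by norm_num)
      (le_trans hA0 hq)
    linarith
  · -- use l = 2
    have h2t : Real.cos (((2:ℤ):ℝ) * t) = Real.cos (2*π - 2*t) := by
      push_cast
      rw [show 2*π - 2*t = -(2*t) + 2*π by ring, Real.cos_add_two_pi, Real.cos_neg]
    have hcos : -(1/2) ≤ Real.cos (((2:ℤ):ℝ) * t) := by
      rw [h2t, ← hcos23]
      exact Real.cos_le_cos_of_nonneg_of_le_pi (by linarith) (by linarith) (by linarith)
    have hq : (2 * zeta β)⁻¹ * 2 ^ (-β) ≤ q β 2 := q_ge hβ (by norm_num) (by norm_num)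
    have hsingle : q β 2 * (1 + Real.cos (((2:ℤ):ℝ) * t)) ≤ 1 + phi β t := by
      rw [one_add_phi hβ t]
      exact Summable.le_tsum (summable_one_add_cos hβ t) 2 (fun j _ => hterm j)
    have hA0 : (0:ℝ) ≤ (2 * zeta β)⁻¹ * 2 ^ (-β) := by positivity
    have := mul_le_mul hq (show (1:ℝ)/2 ≤ 1 + Real.cos (((2:ℤ):ℝ) * t) by linarith)
      (by norm_num) (le_trans hA0 hq)
    exact le_trans (le_of_eq (by ring)) (le_trans this hsingle)

/-- The constant in the key lower bound. -/
noncomputable def K (β : ℝ) : ℝ :=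
  min ((2 * zeta β)⁻¹ * π ^ (-β) / 2)
    (min ((2 * zeta β)⁻¹ * (3*π/2) ^ (-β) * π ^ (1-β))
      ((2 * zeta β)⁻¹ * 2 ^ (-β) / 2 * π ^ (1-β)))

lemma K_pos (hβ : 1 < β) : 0 < K β := by
  have hπ := Real.pi_pos
  have hz := zeta_pos_s6 hβ
  have h1 : (0:ℝ) < (2 * zeta β)⁻¹ * π ^ (-β) / 2 := by positivity
  have h2 : (0:ℝ) < (2 * zeta β)⁻¹ * (3*π/2) ^ (-β) * π ^ (1-β) := by positivity
  have h3 : (0:ℝ) < (2 * zeta β)⁻¹ * 2 ^ (-β) / 2 * π ^ (1-β) := by positivity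
  exact lt_min h1 (lt_min h2 h3)

lemma key_bound (hβ : 1 < β) {t : ℝ} (ht : 0 < t) (ht2 : t ≤ π) :
    K β * t ^ (β - 1) ≤ 1 - |phi β t| := by
  have hπ := Real.pi_pos
  have hz := zeta_pos_s6 hβ
  have htp : t ^ (β-1) ≤ π ^ (β-1) :=
    Real.rpow_le_rpow ht.le ht2 (by linarith)
  have htp0 : (0:ℝ) < t ^ (β-1) := Real.rpow_pos_of_pos ht _
  have hππ : π ^ (1-β) * π ^ (β-1) = 1 := by
    rw [← Real.rpow_add hπ]; norm_num
  have hππ0 : (0:ℝ) < π ^ (1-β) := Real.rpow_pos_of_pos hπ _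
  have hKle1 : K β ≤ (2 * zeta β)⁻¹ * π ^ (-β) / 2 := min_le_left _ _
  have hKle2 : K β ≤ (2 * zeta β)⁻¹ * (3*π/2) ^ (-β) * π ^ (1-β) :=
    le_trans (min_le_right _ _) (min_le_left _ _)
  have hKle3 : K β ≤ (2 * zeta β)⁻¹ * 2 ^ (-β) / 2 * π ^ (1-β) :=
    le_trans (min_le_right _ _) (min_le_right _ _)
  have hminus : K β * t ^ (β-1) ≤ 1 - phi β t := by
    rcases le_or_gt t 1 with h1 | h1
    · calc K β * t ^ (β-1) ≤ (2 * zeta β)⁻¹ * π ^ (-β) / 2 * t ^ (β-1) :=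
            mul_le_mul_of_nonneg_right hKle1 htp0.le
        _ ≤ 1 - phi β t := lb_small hβ ht h1
    · calc K β * t ^ (β-1) ≤ ((2 * zeta β)⁻¹ * (3*π/2) ^ (-β) * π ^ (1-β)) * t ^ (β-1) :=
            mul_le_mul_of_nonneg_right hKle2 htp0.le
        _ ≤ ((2 * zeta β)⁻¹ * (3*π/2) ^ (-β) * π ^ (1-β)) * π ^ (β-1) := by
            apply mul_le_mul_of_nonneg_left htp
            positivity
        _ = (2 * zeta β)⁻¹ * (3*π/2) ^ (-β) := by
            rw [mul_assoc, hππ, mul_one]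
        _ ≤ 1 - phi β t := lb_mid hβ h1.le ht2
  have hplus : K β * t ^ (β-1) ≤ 1 + phi β t := by
    calc K β * t ^ (β-1) ≤ ((2 * zeta β)⁻¹ * 2 ^ (-β) / 2 * π ^ (1-β)) * t ^ (β-1) :=
          mul_le_mul_of_nonneg_right hKle3 htp0.le
      _ ≤ ((2 * zeta β)⁻¹ * 2 ^ (-β) / 2 * π ^ (1-β)) * π ^ (β-1) := by
          apply mul_le_mul_of_nonneg_left htp
          positivity
      _ = (2 * zeta β)⁻¹ * 2 ^ (-β) / 2 := by
          rw [mul_assoc, hππ, mul_one]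
      _ ≤ 1 + phi β t := lb_plus hβ ht ht2
  rcases abs_cases (phi β t) with ⟨h, _⟩ | ⟨h, _⟩ <;> rw [h] <;> linarith

lemma summable_q_mul (hβ : 1 < β) {g : ℤ → ℝ} (hg : ∀ l, |g l| ≤ 1) :
    Summable (fun l : ℤ => q β l * g l) := by
  refine (summable_q hβ).of_norm_bounded fun l => ?_
  rw [norm_mul, Real.norm_eq_abs, Real.norm_eq_abs, abs_of_nonneg (q_nonneg hβ l)]
  calc q β l * |g l| ≤ q β l * 1 := mul_le_mul_of_nonneg_left (hg l) (q_nonneg hβ l)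
    _ = q β l := mul_one _

lemma tsum_q_sin (hβ : 1 < β) (t : ℝ) : ∑' l : ℤ, q β l * Real.sin (l * t) = 0 := by
  set g : ℤ → ℝ := fun l => q β l * Real.sin (l * t) with hg
  have hgs : Summable g := summable_q_mul hβ (fun l => Real.abs_sin_le_one _)
  have hodd : ∀ l : ℤ, g (-l) = -g l := by
    intro l
    simp only [hg, q_symm]
    rw [Int.cast_neg, neg_mul, Real.sin_neg]
    ring
  have he : ∑' l : ℤ, g (-l) = ∑' l : ℤ, g l := (Equiv.neg ℤ).tsum_eq g
  rw [tsum_congr hodd, tsum_neg] at he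
  linarith

lemma tsum_q_shift (hβ : 1 < β) (x : ℤ) (t : ℝ) :
    ∑' l : ℤ, q β l * Real.cos (((x - l : ℤ) : ℝ) * t) = phi β t * Real.cos ((x:ℝ) * t) := by
  have hcos : ∀ l : ℤ, Real.cos (((x - l : ℤ) : ℝ) * t) =
      Real.cos ((x:ℝ)*t) * Real.cos ((l:ℝ)*t) + Real.sin ((x:ℝ)*t) * Real.sin ((l:ℝ)*t) := by
    intro l
    push_cast
    rw [show ((x:ℝ) - l) * t = (x:ℝ)*t - (l:ℝ)*t by ring, Real.cos_sub]
  have h1 : ∀ l : ℤ, q β l * Real.cos (((x - l : ℤ) : ℝ) * t) =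
      Real.cos ((x:ℝ)*t) * (q β l * Real.cos ((l:ℝ)*t)) +
      Real.sin ((x:ℝ)*t) * (q β l * Real.sin ((l:ℝ)*t)) := by
    intro l; rw [hcos l]; ring
  rw [tsum_congr h1, Summable.tsum_add ((summable_phi hβ t).mul_left _)
    (((summable_q_mul hβ (fun l => Real.abs_sin_le_one _))).mul_left _),
    tsum_mul_left, tsum_mul_left, tsum_q_sin hβ t]
  unfold phi
  ring

noncomputable def Qc (β : ℝ) : ℕ → ℤ → ℝ
  | 0, x => if x = 0 then 1 else 0
  | n+1, x => ∑' l : ℤ, q β l * Qc β n (x - l)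

lemma Qc_nonneg (hβ : 1 < β) : ∀ n x, 0 ≤ Qc β n x := by
  intro n
  induction n with
  | zero => intro x; unfold Qc; split <;> norm_num
  | succ n ih =>
    intro x
    show 0 ≤ ∑' l : ℤ, q β l * Qc β n (x - l)
    exact tsum_nonneg fun l => mul_nonneg (q_nonneg hβ l) (ih _)

lemma Qc_le_one (hβ : 1 < β) : ∀ n x, Qc β n x ≤ 1 := by
  intro n
  induction n with
  | zero => intro x; unfold Qc; split <;> norm_num
  | succ n ih =>
    intro x
    show ∑' l : ℤ, q β l * Qc β n (x - l) ≤ 1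
    rw [← tsum_q hβ]
    refine Summable.tsum_le_tsum (fun l => ?_) ?_ (summable_q hβ)
    · calc q β l * Qc β n (x - l) ≤ q β l * 1 :=
            mul_le_mul_of_nonneg_left (ih _) (q_nonneg hβ l)
        _ = q β l := mul_one _
    · refine summable_q_mul hβ fun l => ?_
      rw [abs_of_nonneg (Qc_nonneg hβ n _)]; exact ih _

lemma summable_Qc_mul (hβ : 1 < β) (n : ℕ) (x : ℤ) :
    Summable (fun l : ℤ => q β l * Qc β n (x - l)) := by
  refine summable_q_mul hβ fun l => ?_
  rw [abs_of_nonneg (Qc_nonneg hβ n _)]; exact Qc_le_one hβ n _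

lemma integral_cos_int (x : ℤ) :
    (∫ t in (-π)..π, Real.cos ((x:ℝ) * t)) = if x = 0 then 2*π else 0 := by
  rcases eq_or_ne x 0 with h | h
  · subst h
    simp only [Int.cast_zero, zero_mul, Real.cos_zero]
    rw [intervalIntegral.integral_const]
    simp only [smul_eq_mul, mul_one, if_pos trivial]
    ring
  · rw [if_neg h]
    have hx : ((x:ℝ)) ≠ 0 := Int.cast_ne_zero.2 h
    have hderiv : ∀ t ∈ Set.uIcc (-π) π, HasDerivAt (fun u => Real.sin ((x:ℝ)*u) / x)
        (Real.cos ((x:ℝ)*t)) t := by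
      intro t _
      have h1 : HasDerivAt (fun u : ℝ => (x:ℝ)*u) (x:ℝ) t := by
        simpa using (hasDerivAt_id t).const_mul (x:ℝ)
      have h2 := (Real.hasDerivAt_sin ((x:ℝ)*t)).comp t h1
      have h3 := h2.div_const (x:ℝ)
      simpa [mul_comm, mul_div_assoc, mul_div_cancel_left₀ _ hx] using h3
    rw [intervalIntegral.integral_eq_sub_of_hasDerivAt hderiv ?_]
    · have h1 : Real.sin ((x:ℝ)*π) = 0 := Real.sin_int_mul_pi x
      have h2 : Real.sin ((x:ℝ)*(-π)) = 0 := by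
        rw [show (x:ℝ)*(-π) = -((x:ℝ)*π) by ring, Real.sin_neg, h1, neg_zero]
      rw [h1, h2]; ring
    · apply Continuous.intervalIntegrable
      exact Real.continuous_cos.comp (continuous_const.mul continuous_id)

lemma Qc_eq (hβ : 1 < β) : ∀ (n : ℕ) (x : ℤ),
    Qc β n x = (2*π)⁻¹ * ∫ t in (-π)..π, (phi β t)^n * Real.cos ((x:ℝ) * t) := by
  intro n
  induction n with
  | zero =>
    intro x
    have hπ := Real.pi_pos
    simp only [pow_zero, one_mul]
    rw [integral_cos_int x]
    unfold Qc
    rcases eq_or_ne x 0 with h | h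
    · rw [if_pos h, if_pos h]
      field_simp
    · rw [if_neg h, if_neg h, mul_zero]
  | succ n ih =>
    intro x
    have hπ := Real.pi_pos
    have hcont : ∀ y : ℤ, Continuous (fun t => (phi β t)^n * Real.cos ((y:ℝ) * t)) :=
      fun y => ((continuous_phi hβ).pow n).mul
        (Real.continuous_cos.comp (continuous_const.mul continuous_id))
    show (∑' l : ℤ, q β l * Qc β n (x - l)) = _
    have h1 : ∀ l : ℤ, q β l * Qc β n (x - l) =
        (2*π)⁻¹ * ∫ t in Set.Ioc (-π) π, q β l * ((phi β t)^n * Real.cos (((x - l : ℤ):ℝ) * t)) := by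
      intro l
      rw [ih (x - l), intervalIntegral.integral_of_le (by linarith : -π ≤ π),
        MeasureTheory.integral_const_mul]
      ring
    rw [tsum_congr h1, tsum_mul_left]
    congr 1
    rw [← MeasureTheory.integral_tsum ?_ ?_]
    · rw [← intervalIntegral.integral_of_le (by linarith : -π ≤ π)]
      refine intervalIntegral.integral_congr fun t _ => ?_
      have h2 : ∀ l : ℤ, q β l * ((phi β t)^n * Real.cos (((x - l : ℤ):ℝ) * t)) =
          (phi β t)^n * (q β l * Real.cos (((x - l : ℤ):ℝ) * t)) := fun l => by ring
      rw [tsum_congr h2, tsum_mul_left, tsum_q_shift hβ x t]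
      ring
    · intro l
      exact (Continuous.aestronglyMeasurable (by
        exact continuous_const.mul (hcont (x - l)))).restrict
    · have hb : ∀ l : ℤ, (∫⁻ t in Set.Ioc (-π) π,
          ‖q β l * ((phi β t)^n * Real.cos (((x - l : ℤ):ℝ) * t))‖₊) ≤
          ENNReal.ofReal (q β l) * ENNReal.ofReal (2*π) := by
        intro l
        have hle : ∀ t : ℝ, (‖q β l * ((phi β t)^n * Real.cos (((x - l : ℤ):ℝ) * t))‖₊ : ℝ≥0∞)
            ≤ ENNReal.ofReal (q β l) := by
          intro t
          rw [← enorm_eq_nnnorm, ← ofReal_norm]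
          apply ENNReal.ofReal_le_ofReal
          rw [norm_mul, norm_mul, Real.norm_eq_abs, Real.norm_eq_abs, Real.norm_eq_abs,
            abs_of_nonneg (q_nonneg hβ l), abs_pow]
          have hφ : |phi β t| ≤ 1 := abs_phi_le_one hβ t
          have hφn : |phi β t|^n ≤ 1 := pow_le_one₀ (abs_nonneg _) hφ
          have hc : |Real.cos (((x - l : ℤ):ℝ) * t)| ≤ 1 := Real.abs_cos_le_one _
          calc q β l * (|phi β t|^n * |Real.cos (((x - l : ℤ):ℝ) * t)|) ≤ q β l * (1 * 1) := by
                apply mul_le_mul_of_nonneg_left _ (q_nonneg hβ l)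
                exact mul_le_mul hφn hc (abs_nonneg _) zero_le_one
            _ = q β l := by ring
        calc (∫⁻ t in Set.Ioc (-π) π, ‖q β l * ((phi β t)^n * Real.cos (((x - l : ℤ):ℝ) * t))‖₊)
            ≤ ∫⁻ _ in Set.Ioc (-π) π, ENNReal.ofReal (q β l) := by
              exact MeasureTheory.lintegral_mono fun t => hle t
          _ = ENNReal.ofReal (q β l) * ENNReal.ofReal (2*π) := by
              rw [MeasureTheory.lintegral_const, MeasureTheory.Measure.restrict_apply_univ,
                Real.volume_Ioc]
              congr 1
              rw [show π - (-π) = 2*π by ring]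
      have hsum : (∑' l : ℤ, ENNReal.ofReal (q β l) * ENNReal.ofReal (2*π)) ≠ ⊤ := by
        rw [ENNReal.tsum_mul_right]
        apply ENNReal.mul_ne_top _ ENNReal.ofReal_ne_top
        rw [← ENNReal.ofReal_tsum_of_nonneg (q_nonneg hβ) (summable_q hβ)]
        exact ENNReal.ofReal_ne_top
      exact ne_top_of_le_ne_top hsum (ENNReal.tsum_le_tsum hb)

lemma Qc_le (hβ : 1 < β) (n : ℕ) (x : ℤ) :
    Qc β n x ≤ (2*π)⁻¹ * ∫ t in (-π)..π, |phi β t|^n := by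
  have hπ := Real.pi_pos
  rw [Qc_eq hβ n x]
  apply mul_le_mul_of_nonneg_left _ (by positivity)
  apply intervalIntegral.integral_mono_on (by linarith)
  · exact (((continuous_phi hβ).pow n).mul
      (Real.continuous_cos.comp (continuous_const.mul continuous_id))).intervalIntegrable _ _
  · exact (((continuous_phi hβ).abs.pow n)).intervalIntegrable _ _
  · intro t _
    calc (phi β t)^n * Real.cos ((x:ℝ)*t) ≤ |(phi β t)^n * Real.cos ((x:ℝ)*t)| := le_abs_self _
      _ = |phi β t|^n * |Real.cos ((x:ℝ)*t)| := by rw [abs_mul, abs_pow]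
      _ ≤ |phi β t|^n * 1 :=
          mul_le_mul_of_nonneg_left (Real.abs_cos_le_one _) (by positivity)
      _ = |phi β t|^n := mul_one _

lemma phi_even (β t : ℝ) : phi β (-t) = phi β t := by
  unfold phi
  exact tsum_congr fun l => by rw [mul_neg, Real.cos_neg]

lemma key_bound' (hβ : 1 < β) {t : ℝ} (ht : t ≠ 0) (h2 : |t| ≤ π) :
    K β * |t| ^ (β-1) ≤ 1 - |phi β t| := by
  rcases ht.lt_or_gt with h | h
  · have h3 : phi β t = phi β (-t) := by rw [phi_even]
    rw [h3, abs_of_neg h]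
    rw [abs_of_neg h] at h2
    exact key_bound hβ (by linarith) h2
  · rw [abs_of_pos h]
    rw [abs_of_pos h] at h2
    exact key_bound hβ h h2

lemma abs_phi_lt_one (hβ : 1 < β) {t : ℝ} (ht : t ≠ 0) (h2 : |t| ≤ π) :
    |phi β t| < 1 := by
  have h := key_bound' hβ ht h2
  have h1 : (0:ℝ) < K β * |t| ^ (β-1) :=
    mul_pos (K_pos hβ) (Real.rpow_pos_of_pos (abs_pos.2 ht) _)
  linarith

lemma integrableOn_rpow_abs (hβ : 1 < β) (hβ2 : β < 2) :
    MeasureTheory.IntegrableOn (fun t : ℝ => |t| ^ (1-β)) (Set.Ioc (-π) π) := by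
  have hπ := Real.pi_pos
  have h1 : IntervalIntegrable (fun t : ℝ => t ^ (1-β)) volume 0 π :=
    intervalIntegral.intervalIntegrable_rpow' (by linarith)
  have h2 : IntervalIntegrable (fun t : ℝ => |t| ^ (1-β)) volume 0 π := by
    refine h1.congr ?_
    have huIoc : Set.uIoc (0:ℝ) π = Set.Ioc 0 π := Set.uIoc_of_le hπ.le
    intro t htmem
    rw [huIoc] at htmem
    beta_reduce
    rw [abs_of_pos htmem.1]
  have h3 : IntervalIntegrable (fun t : ℝ => |t| ^ (1-β)) volume 0 (-π) := by
    have h4 := (IntervalIntegrable.iff_comp_neg (f := fun t : ℝ => |t| ^ (1-β))).mp h2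
    simp only [abs_neg, neg_zero] at h4
    exact h4
  have h5 : IntervalIntegrable (fun t : ℝ => |t| ^ (1-β)) volume (-π) π :=
    (h3.symm).trans h2
  rw [intervalIntegrable_iff_integrableOn_Ioc_of_le (by linarith)] at h5
  exact h5

lemma tsum_Qc_ne_top (hβ : 1 < β) (hβ2 : β < 2) (x : ℤ) :
    ∑' n : ℕ, ENNReal.ofReal (Qc β n x) ≠ ⊤ := by
  have hπ := Real.pi_pos
  have hK := K_pos hβ
  -- bound each term by a lintegral
  have h1 : ∀ n : ℕ, ENNReal.ofReal (Qc β n x) ≤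
      ENNReal.ofReal ((2*π)⁻¹) * ∫⁻ t in Set.Ioc (-π) π, ENNReal.ofReal (|phi β t|^n) := by
    intro n
    refine le_trans (ENNReal.ofReal_le_ofReal (Qc_le hβ n x)) ?_
    rw [ENNReal.ofReal_mul (by positivity)]
    refine mul_le_mul_right (le_of_eq ?_) _
    rw [intervalIntegral.integral_of_le (by linarith : -π ≤ π)]
    exact MeasureTheory.ofReal_integral_eq_lintegral_ofReal
      (((continuous_phi hβ).abs.pow n).integrableOn_Ioc)
      (MeasureTheory.ae_of_all _ fun t => by positivity)
  have hmeas : ∀ n : ℕ, AEMeasurable (fun t : ℝ => ENNReal.ofReal (|phi β t|^n))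
      (volume.restrict (Set.Ioc (-π) π)) :=
    fun n => (((continuous_phi hβ).abs.pow n).measurable.ennreal_ofReal).aemeasurable
  have h2 : ∑' n : ℕ, (∫⁻ t in Set.Ioc (-π) π, ENNReal.ofReal (|phi β t|^n)) =
      ∫⁻ t in Set.Ioc (-π) π, ∑' n : ℕ, ENNReal.ofReal (|phi β t|^n) :=
    (MeasureTheory.lintegral_tsum hmeas).symm
  have hne : ∀ᵐ t : ℝ ∂(volume.restrict (Set.Ioc (-π) π)), t ≠ 0 := by
    refine MeasureTheory.ae_restrict_of_ae ?_
    have hset : {t : ℝ | ¬ t ≠ 0} = {0} := by ext t; simp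
    rw [MeasureTheory.ae_iff, hset]
    exact MeasureTheory.measure_singleton 0
  have h3 : ∀ᵐ t : ℝ ∂(volume.restrict (Set.Ioc (-π) π)),
      (∑' n : ℕ, ENNReal.ofReal (|phi β t|^n)) ≤
        ENNReal.ofReal ((K β)⁻¹ * |t| ^ (1-β)) := by
    filter_upwards [MeasureTheory.ae_restrict_mem measurableSet_Ioc, hne] with t htmem ht0
    have habs : |t| ≤ π := abs_le.2 ⟨by linarith [htmem.1], htmem.2⟩
    have hr1 : |phi β t| < 1 := abs_phi_lt_one hβ ht0 habs
    have hkey := key_bound' hβ ht0 habs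
    have htp : (0:ℝ) < |t| ^ (β-1) := Real.rpow_pos_of_pos (abs_pos.2 ht0) _
    have hgeom : (∑' n : ℕ, ENNReal.ofReal (|phi β t|^n)) =
        (1 - ENNReal.ofReal (|phi β t|))⁻¹ := by
      rw [tsum_congr fun n => (ENNReal.ofReal_pow (abs_nonneg _) n)]
      exact ENNReal.tsum_geometric _
    rw [hgeom]
    have hsub : ENNReal.ofReal (K β * |t| ^ (β-1)) ≤ 1 - ENNReal.ofReal (|phi β t|) := by
      rw [← ENNReal.ofReal_one, ← ENNReal.ofReal_sub _ (abs_nonneg _)]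
      exact ENNReal.ofReal_le_ofReal (by linarith)
    calc (1 - ENNReal.ofReal (|phi β t|))⁻¹
        ≤ (ENNReal.ofReal (K β * |t| ^ (β-1)))⁻¹ := ENNReal.inv_le_inv' hsub
      _ = ENNReal.ofReal ((K β * |t| ^ (β-1))⁻¹) :=
          (ENNReal.ofReal_inv_of_pos (by positivity)).symm
      _ = ENNReal.ofReal ((K β)⁻¹ * |t| ^ (1-β)) := by
          congr 1
          rw [mul_inv, ← Real.rpow_neg (abs_nonneg _)]
          ring_nf
  have h4 : (∫⁻ t in Set.Ioc (-π) π, ENNReal.ofReal ((K β)⁻¹ * |t| ^ (1-β))) ≠ ⊤ := by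
    rw [← MeasureTheory.ofReal_integral_eq_lintegral_ofReal
      ((integrableOn_rpow_abs hβ hβ2).const_mul _)
      (MeasureTheory.ae_of_all _ fun t => by positivity)]
    exact ENNReal.ofReal_ne_top
  have h5 : ∑' n : ℕ, ENNReal.ofReal (Qc β n x) ≤
      ENNReal.ofReal ((2*π)⁻¹) * ∫⁻ t in Set.Ioc (-π) π, ENNReal.ofReal ((K β)⁻¹ * |t| ^ (1-β)) := by
    calc ∑' n : ℕ, ENNReal.ofReal (Qc β n x)
        ≤ ∑' n : ℕ, ENNReal.ofReal ((2*π)⁻¹) * ∫⁻ t in Set.Ioc (-π) π,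
            ENNReal.ofReal (|phi β t|^n) := ENNReal.tsum_le_tsum h1
      _ = ENNReal.ofReal ((2*π)⁻¹) * ∑' n : ℕ, ∫⁻ t in Set.Ioc (-π) π,
            ENNReal.ofReal (|phi β t|^n) := ENNReal.tsum_mul_left
      _ = ENNReal.ofReal ((2*π)⁻¹) * ∫⁻ t in Set.Ioc (-π) π,
            ∑' n : ℕ, ENNReal.ofReal (|phi β t|^n) := by rw [h2]
      _ ≤ _ := mul_le_mul_right (MeasureTheory.lintegral_mono_ae h3) _
  exact ne_top_of_le_ne_top (ENNReal.mul_ne_top ENNReal.ofReal_ne_top h4) h5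

lemma tsum_paths (hβ : 1 < β) : ∀ (n : ℕ) (x : ℤ),
    (∑' v : Fin n → ℤ, if (∑ i, v i) = x then ENNReal.ofReal (∏ i, q β (v i)) else 0) =
      ENNReal.ofReal (Qc β n x) := by
  intro n
  induction n with
  | zero =>
    intro x
    have hz : ∀ v : Fin 0 → ℤ, v = (default : Fin 0 → ℤ) := fun v => Subsingleton.elim _ _
    rw [tsum_eq_single (default : Fin 0 → ℤ) (fun b hb => absurd (hz b) hb)]
    simp only [Finset.univ_eq_empty, Finset.sum_empty, Finset.prod_empty]
    show (if (0:ℤ) = x then ENNReal.ofReal 1 else 0) = ENNReal.ofReal (Qc β 0 x)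
    unfold Qc
    rcases eq_or_ne x 0 with h | h
    · subst h; simp
    · rw [if_neg (fun hh => h hh.symm), if_neg h, ENNReal.ofReal_zero]
  | succ n ih =>
    intro x
    set e := Fin.consEquiv (fun _ : Fin (n+1) => ℤ) with he
    set f : (Fin (n+1) → ℤ) → ℝ≥0∞ := fun v =>
      if (∑ i, v i) = x then ENNReal.ofReal (∏ i, q β (v i)) else 0 with hf
    have h1 : ∑' v : Fin (n+1) → ℤ, f v = ∑' p : ℤ × (Fin n → ℤ), f (e p) :=
      (Equiv.tsum_eq e f).symm
    rw [h1, ENNReal.tsum_prod']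
    have h2 : ∀ (l : ℤ) (v : Fin n → ℤ), f (e (l, v)) =
        ENNReal.ofReal (q β l) *
          (if (∑ i, v i) = x - l then ENNReal.ofReal (∏ i, q β (v i)) else 0) := by
      intro l v
      have hcons : e (l, v) = Fin.cons l v := rfl
      rw [hf, hcons]
      simp only [Fin.sum_cons]
      rw [Fin.prod_univ_succ]
      simp only [Fin.cons_zero, Fin.cons_succ]
      rcases eq_or_ne (l + ∑ i, v i) x with h | h
      · rw [if_pos h, if_pos (by omega), ENNReal.ofReal_mul (q_nonneg hβ l)]
      · rw [if_neg h, if_neg (by omega), mul_zero]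
    calc ∑' (l : ℤ) (v : Fin n → ℤ), f (e (l, v))
        = ∑' l : ℤ, ENNReal.ofReal (q β l) *
            ∑' v : Fin n → ℤ, (if (∑ i, v i) = x - l then
              ENNReal.ofReal (∏ i, q β (v i)) else 0) := by
          refine tsum_congr fun l => ?_
          rw [← ENNReal.tsum_mul_left]
          exact tsum_congr fun v => h2 l v
      _ = ∑' l : ℤ, ENNReal.ofReal (q β l * Qc β n (x - l)) := by
          refine tsum_congr fun l => ?_
          rw [ih (x - l), ← ENNReal.ofReal_mul (q_nonneg hβ l)]
      _ = ENNReal.ofReal (Qc β (n+1) x) := by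
          rw [← ENNReal.ofReal_tsum_of_nonneg
            (fun l => mul_nonneg (q_nonneg hβ l) (Qc_nonneg hβ n _)) (summable_Qc_mul hβ n x)]
          rfl

/-- Extension of a finite tuple of increments by zero. -/
def ve {n : ℕ} (v : Fin n → ℤ) (j : ℕ) : ℤ := if h : j < n then v ⟨j, h⟩ else 0

/-- Partial sums of the increments. -/
def psum {n : ℕ} (v : Fin n → ℤ) (i : ℕ) : ℤ := ∑ j ∈ Finset.range i, ve v j

lemma prob_le (hβ : 1 < β) {Ω : Type*} [MeasurableSpace Ω] (P : Measure Ω)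
    [IsProbabilityMeasure P] (Y : ℕ → Ω → ℤ) (hY : ∀ n, Measurable (Y n))
    (hlaw : ∀ (n : ℕ) (y : ℕ → ℤ),
      P {ω | ∀ i ≤ n, Y i ω = y i} =
        ENNReal.ofReal
          (if y 0 = 0 then ∏ i ∈ Finset.range n, q β (y (i + 1) - y i) else 0))
    (n : ℕ) (x : ℤ) : P {ω | Y n ω = x} ≤ ENNReal.ofReal (Qc β n x) := by
  have hY0 : P {ω | Y 0 ω = 0} = 1 := by
    have h := hlaw 0 (fun _ => 0)
    rw [if_pos rfl, Finset.range_zero, Finset.prod_empty, ENNReal.ofReal_one] at h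
    have hset : {ω | ∀ i ≤ 0, Y i ω = (fun _ => (0:ℤ)) i} = {ω | Y 0 ω = 0} := by
      ext ω
      constructor
      · intro h'; exact h' 0 le_rfl
      · intro h' i hi
        have : i = 0 := Nat.le_zero.mp hi
        subst this; exact h'
    rw [hset] at h
    exact h
  have hY0c : P {ω | Y 0 ω = 0}ᶜ = 0 := by
    have hm : MeasurableSet {ω | Y 0 ω = 0} := hY 0 (measurableSet_singleton 0)
    rw [measure_compl hm (measure_ne_top P _), hY0, measure_univ, tsub_self]
  set C : (Fin n → ℤ) → Set Ω := fun v =>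
    if (∑ i, v i) = x then {ω | ∀ i ≤ n, Y i ω = psum v i} else ∅ with hC
  have hPC : ∀ v, P (C v) =
      (if (∑ i, v i) = x then ENNReal.ofReal (∏ i, q β (v i)) else 0) := by
    intro v
    rcases eq_or_ne (∑ i, v i) x with h | h
    · rw [hC]
      simp only [if_pos h]
      have h2 := hlaw n (psum v)
      have h0 : psum v 0 = 0 := by simp [psum]
      rw [if_pos h0] at h2
      rw [h2]
      congr 1
      have ha : ∀ i ∈ Finset.range n, q β (psum v (i+1) - psum v i) = q β (ve v i) := by
        intro i _
        congr 1
        simp [psum, Finset.sum_range_succ]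
      rw [Finset.prod_congr rfl ha, ← Fin.prod_univ_eq_prod_range (fun j => q β (ve v j)) n]
      refine Finset.prod_congr rfl fun i _ => ?_
      congr 1
      simp [ve, i.isLt]
    · rw [hC]
      simp only [if_neg h]
      exact measure_empty
  have hcover : {ω | Y n ω = x} ⊆ {ω | Y 0 ω = 0}ᶜ ∪ ⋃ v : Fin n → ℤ, C v := by
    intro ω hω
    rcases eq_or_ne (Y 0 ω) 0 with h0 | h0
    · right
      set v : Fin n → ℤ := fun i => Y ((i:ℕ)+1) ω - Y (i:ℕ) ω with hv
      refine Set.mem_iUnion.2 ⟨v, ?_⟩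
      have hve : ∀ j < n, ve v j = Y (j+1) ω - Y j ω := by
        intro j hj
        simp [ve, hj, hv]
      have hps : ∀ i, i ≤ n → Y i ω = psum v i := by
        intro i
        induction i with
        | zero => intro _; simpa [psum] using h0
        | succ j ihj =>
          intro hj
          have hj' : j ≤ n := by omega
          have heq : psum v (j+1) = psum v j + ve v j := by
            simp [psum, Finset.sum_range_succ]
          rw [heq, ← ihj hj', hve j (by omega)]
          ring
      have hsum : (∑ i, v i) = x := by
        rw [hv, Fin.sum_univ_eq_sum_range (fun i => Y (i+1) ω - Y i ω) n,
          Finset.sum_range_sub (fun i => Y i ω), h0, sub_zero]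
        exact hω
      have hCv : C v = {ω | ∀ i ≤ n, Y i ω = psum v i} := by rw [hC]; simp only [if_pos hsum]
      rw [hCv]
      exact fun i hi => hps i hi
    · left; exact h0
  calc P {ω | Y n ω = x} ≤ P ({ω | Y 0 ω = 0}ᶜ ∪ ⋃ v : Fin n → ℤ, C v) :=
        measure_mono hcover
    _ ≤ P {ω | Y 0 ω = 0}ᶜ + P (⋃ v : Fin n → ℤ, C v) := measure_union_le _ _
    _ ≤ 0 + ∑' v : Fin n → ℤ, P (C v) := by
        rw [hY0c]
        exact add_le_add le_rfl (measure_iUnion_le _)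
    _ = ∑' v : Fin n → ℤ, (if (∑ i, v i) = x then ENNReal.ofReal (∏ i, q β (v i)) else 0) := by
        rw [zero_add]
        exact tsum_congr hPC
    _ = ENNReal.ofReal (Qc β n x) := tsum_paths hβ n x


/-- for every `1 < β < 2`, the random walk `(Y_n^β)` on `ℤ` started at `0`
with i.i.d. increments of law `P(increment = l) = (2ζ(β))⁻¹ |l|^(-β)` (`l ≠ 0`) is
transient: almost surely `|Y_n^β| → ∞`. -/
theorem random_walk_transient (β : ℝ) (hβ₁ : 1 < β) (hβ₂ : β < 2)
    {Ω : Type*} [MeasurableSpace Ω] (P : Measure Ω) [IsProbabilityMeasure P]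
    (Y : ℕ → Ω → ℤ) (hY : ∀ n, Measurable (Y n))
    (hlaw : ∀ (n : ℕ) (y : ℕ → ℤ),
      P {ω | ∀ i ≤ n, Y i ω = y i} =
        ENNReal.ofReal
          (if y 0 = 0 then ∏ i ∈ Finset.range n, q β (y (i + 1) - y i) else 0)) :
    ∀ᵐ ω ∂P, Tendsto (fun n => |Y n ω|) atTop atTop := by
  have hBC : ∀ x : ℤ, ∀ᵐ ω ∂P, ∀ᶠ n in atTop, Y n ω ≠ x := by
    intro x
    have hsum : (∑' n : ℕ, P {ω | Y n ω = x}) ≠ ⊤ :=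
      ne_top_of_le_ne_top (tsum_Qc_ne_top hβ₁ hβ₂ x)
        (ENNReal.tsum_le_tsum fun n => prob_le hβ₁ P Y hY hlaw n x)
    have h := MeasureTheory.ae_eventually_notMem (s := fun n => {ω | Y n ω = x}) hsum
    filter_upwards [h] with ω hω
    exact hω.mono fun n hn => hn
  have hall : ∀ᵐ ω ∂P, ∀ x : ℤ, ∀ᶠ n in atTop, Y n ω ≠ x := ae_all_iff.2 hBC
  filter_upwards [hall] with ω hω
  rw [Filter.tendsto_atTop]
  intro b
  have hfin : ∀ᶠ n in atTop, ∀ x ∈ Finset.Icc (-b) b, Y n ω ≠ x :=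
    (eventually_all_finset _).2 fun x _ => hω x
  filter_upwards [hfin] with n hn
  have hx : Y n ω ∉ Finset.Icc (-b) b := fun hmem => hn _ hmem rfl
  rw [Finset.mem_Icc] at hx
  rw [le_abs]
  omega


end SchmelingStratmann
end
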